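/- (Key identity in the proof of Proposition 6 on NIS redundancy.) Let (Ω, μ) be a probability space, S, U, V, T, W finite nonempty measurable spaces with measurable singletons, ψ : S ≃ U × V a bijection (measurable with measurable inverse), and X : Ω → S, Y : Ω → T, Z : Ω → W measurable. Define A := ω ↦ (ψ (X ω)).1 and B := ω ↦ (ψ (X ω)).2. Assume A is independent of the triple ⟨B, Y, Z⟩ and H[B | Y] = 0. Then H[X | ⟨Y, Z⟩] = H[X | Y] = H[A], and H[X | ⟨Y, Z⟩] = H[X | Z] − H[B | Z]. -/
import Mathlib


open MeasureTheory ProbabilityTheory Real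

/-- Shannon entropy (natural logarithm) of a random variable `X : Ω → S`:
`H[X] = ∑ₓ -P(X = x) log P(X = x)`. -/
noncomputable def entropy {Ω S : Type*} [MeasurableSpace Ω] [MeasurableSpace S]
    (μ : Measure Ω) (X : Ω → S) : ℝ :=
  ∑' x : S, Real.negMulLog (μ (X ⁻¹' {x})).toReal

/-- Conditional Shannon entropy `H[X|Y] = ∑_y P(Y = y) · H[X ; μ conditioned on Y = y]`. -/
noncomputable def condEntropy {Ω S T : Type*} [MeasurableSpace Ω] [MeasurableSpace S]
    [MeasurableSpace T] (μ : Measure Ω) (X : Ω → S) (Y : Ω → T) : ℝ :=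
  ∑' y : T, (μ (Y ⁻¹' {y})).toReal * entropy (μ[|Y ⁻¹' {y}]) X

/-- Mutual information `I[X:Y] = H[X] + H[Y] − H[⟨X,Y⟩]`. -/
noncomputable def mutualInfo {Ω S T : Type*} [MeasurableSpace Ω] [MeasurableSpace S]
    [MeasurableSpace T] (μ : Measure Ω) (X : Ω → S) (Y : Ω → T) : ℝ :=
  entropy μ X + entropy μ Y - entropy μ (fun ω => (X ω, Y ω))

/-- Conditional mutual information
`I[X:Y|Z] = H[⟨X,Z⟩] + H[⟨Y,Z⟩] − H[⟨⟨X,Y⟩,Z⟩] − H[Z]`. -/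
noncomputable def condMutualInfo {Ω S T W : Type*} [MeasurableSpace Ω] [MeasurableSpace S]
    [MeasurableSpace T] [MeasurableSpace W] (μ : Measure Ω)
    (X : Ω → S) (Y : Ω → T) (Z : Ω → W) : ℝ :=
  entropy μ (fun ω => (X ω, Z ω)) + entropy μ (fun ω => (Y ω, Z ω))
    - entropy μ (fun ω => ((X ω, Y ω), Z ω)) - entropy μ Z

section Aux

variable {Ω : Type*} [MeasurableSpace Ω]

lemma entropy_eq_sum {S : Type*} [Fintype S] [MeasurableSpace S]
    (μ : Measure Ω) (X : Ω → S) :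
    entropy μ X = ∑ x, Real.negMulLog (μ (X ⁻¹' {x})).toReal :=
  tsum_fintype _

lemma condEntropy_eq_sum {S T : Type*} [Fintype T] [MeasurableSpace S] [MeasurableSpace T]
    (μ : Measure Ω) (X : Ω → S) (Y : Ω → T) :
    condEntropy μ X Y = ∑ y, (μ (Y ⁻¹' {y})).toReal * entropy (μ[|Y ⁻¹' {y}]) X :=
  tsum_fintype _

lemma entropy_comp_equiv {S S' : Type*} [MeasurableSpace S] [MeasurableSpace S']
    (μ : Measure Ω) (X : Ω → S) (e : S ≃ S') :
    entropy μ (fun ω => e (X ω)) = entropy μ X := by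
  unfold entropy
  refine (Equiv.tsum_eq e _).symm.trans (tsum_congr fun x => ?_)
  have hs : (fun ω => e (X ω)) ⁻¹' {e x} = X ⁻¹' {x} := by ext ω; simp
  rw [hs]

lemma aux_toReal_le_one {x : ENNReal} (h : x ≤ 1) : x.toReal ≤ 1 := by
  simpa using ENNReal.toReal_mono ENNReal.one_ne_top h

lemma cond_apply_le_one (μ' : Measure Ω) [IsFiniteMeasure μ'] {E : Set Ω}
    (hE : MeasurableSet E) (t : Set Ω) : μ'[|E] t ≤ 1 := by
  rw [cond_apply hE]
  rcases eq_or_ne (μ' E) 0 with h0 | h0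
  · simp [h0, measure_mono_null (Set.inter_subset_left) h0]
  · calc (μ' E)⁻¹ * μ' (E ∩ t) ≤ (μ' E)⁻¹ * μ' E := by
          gcongr
          exact Set.inter_subset_left
      _ = 1 := ENNReal.inv_mul_cancel h0 (measure_ne_top μ' E)

lemma entropy_cond_nonneg {S : Type*} [Fintype S] [MeasurableSpace S]
    (μ : Measure Ω) [IsFiniteMeasure μ] {E : Set Ω} (hE : MeasurableSet E) (X : Ω → S) :
    0 ≤ entropy (μ[|E]) X := by
  rw [entropy_eq_sum]
  refine Finset.sum_nonneg fun x _ => negMulLog_nonneg ENNReal.toReal_nonneg ?_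
  exact aux_toReal_le_one (cond_apply_le_one μ hE _)

lemma sum_toReal_preimage {T : Type*} [Fintype T] [MeasurableSpace T]
    [MeasurableSingletonClass T]
    (μ : Measure Ω) [IsProbabilityMeasure μ] {f : Ω → T} (hf : Measurable f) :
    ∑ t : T, (μ (f ⁻¹' {t})).toReal = 1 := by
  rw [← ENNReal.toReal_sum (fun a _ => measure_ne_top μ _),
    sum_measure_preimage_singleton Finset.univ (fun t _ => hf (measurableSet_singleton t))]
  simp

lemma pair_preimage {U V : Type*} (A : Ω → U) (B : Ω → V) (a : U) (b : V) :
    (fun ω => (A ω, B ω)) ⁻¹' {(a, b)} = A ⁻¹' {a} ∩ B ⁻¹' {b} := by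
  ext ω
  simp [Prod.ext_iff]

lemma entropy_pair_of_det {U V : Type*} [Fintype U] [Fintype V] [MeasurableSpace U]
    [MeasurableSpace V] (ν : Measure Ω) (A : Ω → U) (B : Ω → V) {b0 : V}
    (hb0 : ν ((B ⁻¹' {b0})ᶜ) = 0) :
    entropy ν (fun ω => (A ω, B ω)) = entropy ν A := by
  rw [entropy_eq_sum, entropy_eq_sum, Fintype.sum_prod_type]
  refine Finset.sum_congr rfl fun a _ => ?_
  rw [Finset.sum_eq_single b0]
  · rw [pair_preimage, measure_inter_conull hb0]
  · intro b _ hb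
    have h1 : (fun ω => (A ω, B ω)) ⁻¹' {(a, b)} ⊆ (B ⁻¹' {b0})ᶜ := by
      intro ω hω
      simp only [Set.mem_preimage, Set.mem_singleton_iff, Prod.mk.injEq] at hω
      simp [Set.mem_compl_iff, hω.2, hb]
    rw [measure_mono_null h1 hb0]
    simp
  · intro h
    exact absurd (Finset.mem_univ b0) h

lemma entropy_pair_of_indep {U V : Type*} [Fintype U] [Fintype V] [MeasurableSpace U]
    [MeasurableSpace V] [MeasurableSingletonClass U] [MeasurableSingletonClass V]
    (μ ν : Measure Ω) [IsProbabilityMeasure μ] [IsProbabilityMeasure ν]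
    (A : Ω → U) (B : Ω → V) (hA : Measurable A) (hB : Measurable B)
    (h : ∀ a b, ν ((fun ω => (A ω, B ω)) ⁻¹' {(a, b)}) = μ (A ⁻¹' {a}) * ν (B ⁻¹' {b})) :
    entropy ν (fun ω => (A ω, B ω)) = entropy μ A + entropy ν B := by
  have hsumA : ∑ a : U, (μ (A ⁻¹' {a})).toReal = 1 := sum_toReal_preimage μ hA
  have hsumB : ∑ b : V, (ν (B ⁻¹' {b})).toReal = 1 := sum_toReal_preimage ν hB
  rw [entropy_eq_sum, entropy_eq_sum, entropy_eq_sum, Fintype.sum_prod_type]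
  have key : ∀ a : U, ∀ b : V,
      Real.negMulLog (ν ((fun ω => (A ω, B ω)) ⁻¹' {(a, b)})).toReal
        = (ν (B ⁻¹' {b})).toReal * Real.negMulLog (μ (A ⁻¹' {a})).toReal
          + (μ (A ⁻¹' {a})).toReal * Real.negMulLog (ν (B ⁻¹' {b})).toReal := by
    intro a b
    rw [h a b, ENNReal.toReal_mul, Real.negMulLog_mul]
  calc ∑ a : U, ∑ b : V, Real.negMulLog (ν ((fun ω => (A ω, B ω)) ⁻¹' {(a, b)})).toReal
      = ∑ a : U, ((∑ b : V, (ν (B ⁻¹' {b})).toReal) * Real.negMulLog (μ (A ⁻¹' {a})).toReal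
          + (μ (A ⁻¹' {a})).toReal * ∑ b : V, Real.negMulLog (ν (B ⁻¹' {b})).toReal) := by
        refine Finset.sum_congr rfl fun a _ => ?_
        rw [Finset.sum_congr rfl fun b _ => key a b, Finset.sum_add_distrib,
          ← Finset.sum_mul, ← Finset.mul_sum]
    _ = ∑ a : U, (Real.negMulLog (μ (A ⁻¹' {a})).toReal
          + (μ (A ⁻¹' {a})).toReal * ∑ b : V, Real.negMulLog (ν (B ⁻¹' {b})).toReal) := by
        simp_rw [hsumB, one_mul]
    _ = (∑ a : U, Real.negMulLog (μ (A ⁻¹' {a})).toReal)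
          + (∑ a : U, (μ (A ⁻¹' {a})).toReal) * ∑ b : V, Real.negMulLog (ν (B ⁻¹' {b})).toReal := by
        rw [Finset.sum_add_distrib, Finset.sum_mul]
    _ = _ := by rw [hsumA, one_mul]

lemma exists_of_entropy_zero {V : Type*} [Fintype V] [MeasurableSpace V]
    [MeasurableSingletonClass V]
    (ν : Measure Ω) [IsProbabilityMeasure ν] {B : Ω → V} (hB : Measurable B)
    (h : entropy ν B = 0) : ∃ b, ν ((B ⁻¹' {b})ᶜ) = 0 := by
  rw [entropy_eq_sum] at h
  have hterm : ∀ b ∈ Finset.univ, (0 : ℝ) ≤ Real.negMulLog (ν (B ⁻¹' {b})).toReal :=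
    fun b _ => negMulLog_nonneg ENNReal.toReal_nonneg (aux_toReal_le_one prob_le_one)
  have hz := (Finset.sum_eq_zero_iff_of_nonneg hterm).mp h
  have hsum := sum_toReal_preimage ν hB
  have hex : ∃ b, (ν (B ⁻¹' {b})).toReal ≠ 0 := by
    by_contra hc
    push_neg at hc
    simp [hc] at hsum
  obtain ⟨b, hb⟩ := hex
  have h1 : (ν (B ⁻¹' {b})).toReal = 1 := by
    have h0 := hz b (Finset.mem_univ b)
    unfold Real.negMulLog at h0
    rw [neg_mul, neg_eq_zero] at h0
    rcases mul_eq_zero.mp h0 with h0 | h0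
    · exact absurd h0 hb
    · rcases Real.log_eq_zero.mp h0 with h0 | h0 | h0
      · exact absurd h0 hb
      · exact h0
      · linarith [ENNReal.toReal_nonneg (a := ν (B ⁻¹' {b}))]
  have h2 : ν (B ⁻¹' {b}) = 1 := (ENNReal.toReal_eq_one_iff _).mp h1
  refine ⟨b, ?_⟩
  rw [measure_compl (hB (measurableSet_singleton b)) (measure_ne_top ν _), h2]
  simp

end Aux

/-- key identity in the proof of NIS redundancy symmetry: if `ψ` splits `X`
into noise `A` and representation `B` with `A` independent of `⟨B,Y,Z⟩` and `H[B|Y] = 0`,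
then `H[X|⟨Y,Z⟩] = H[X|Y] = H[A]` and `H[X|⟨Y,Z⟩] = H[X|Z] − H[B|Z]`. -/
theorem nis_redundancy_key_identity {Ω S U V T W : Type*} [MeasurableSpace Ω]
    [Fintype S] [Nonempty S] [MeasurableSpace S] [MeasurableSingletonClass S]
    [Fintype U] [Nonempty U] [MeasurableSpace U] [MeasurableSingletonClass U]
    [Fintype V] [Nonempty V] [MeasurableSpace V] [MeasurableSingletonClass V]
    [Fintype T] [Nonempty T] [MeasurableSpace T] [MeasurableSingletonClass T]
    [Fintype W] [Nonempty W] [MeasurableSpace W] [MeasurableSingletonClass W]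
    (μ : Measure Ω) [IsProbabilityMeasure μ]
    (ψ : S ≃ U × V) (hψ : Measurable ψ) (hψ' : Measurable ψ.symm)
    (X : Ω → S) (Y : Ω → T) (Z : Ω → W)
    (hX : Measurable X) (hY : Measurable Y) (hZ : Measurable Z)
    (A : Ω → U) (B : Ω → V)
    (hA : A = fun ω => (ψ (X ω)).1) (hB : B = fun ω => (ψ (X ω)).2)
    (hindep : IndepFun A (fun ω => (B ω, Y ω, Z ω)) μ)
    (hBY : condEntropy μ B Y = 0) :
    (condEntropy μ X (fun ω => (Y ω, Z ω)) = condEntropy μ X Y ∧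
      condEntropy μ X Y = entropy μ A) ∧
    condEntropy μ X (fun ω => (Y ω, Z ω)) = condEntropy μ X Z - condEntropy μ B Z := by
  have hAm : Measurable A := by rw [hA]; exact measurable_fst.comp (hψ.comp hX)
  have hBm : Measurable B := by rw [hB]; exact measurable_snd.comp (hψ.comp hX)
  set C : Ω → V × T × W := fun ω => (B ω, Y ω, Z ω) with hC
  have hCm : Measurable C := hBm.prodMk (hY.prodMk hZ)
  -- X and ⟨A,B⟩ have the same entropy under every measure
  have hXpair : ∀ ν : Measure Ω, entropy ν X = entropy ν (fun ω => (A ω, B ω)) := by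
    intro ν
    rw [← entropy_comp_equiv ν X ψ]
    congr 1
    funext ω
    simp [hA, hB]
  -- independence consequences
  have hind : ∀ (a : U) (t : Set (V × T × W)), MeasurableSet t →
      μ (A ⁻¹' {a} ∩ C ⁻¹' t) = μ (A ⁻¹' {a}) * μ (C ⁻¹' t) := fun a t ht =>
    hindep.measure_inter_preimage_eq_mul _ _ (measurableSet_singleton a) ht
  -- conditional marginal of A is unchanged on C-measurable events
  have hcondA : ∀ (t : Set (V × T × W)), MeasurableSet t → μ (C ⁻¹' t) ≠ 0 →
      ∀ a, (μ[|C ⁻¹' t]) (A ⁻¹' {a}) = μ (A ⁻¹' {a}) := by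
    intro t ht hne a
    rw [cond_apply (hCm ht), Set.inter_comm, hind a t ht, mul_comm (μ (A ⁻¹' {a})),
      ← mul_assoc, ENNReal.inv_mul_cancel hne (measure_ne_top μ _), one_mul]
  have hAent : ∀ (E : Set Ω), (∀ a, (μ[|E]) (A ⁻¹' {a}) = μ (A ⁻¹' {a})) →
      entropy (μ[|E]) A = entropy μ A := by
    intro E hEq
    rw [entropy_eq_sum, entropy_eq_sum]
    exact Finset.sum_congr rfl fun a _ => by rw [hEq a]
  -- event translations
  have hEyz : ∀ (y : T) (z : W),
      (fun ω => (Y ω, Z ω)) ⁻¹' {(y, z)} = C ⁻¹' (Set.univ ×ˢ {y} ×ˢ {z}) := by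
    intro y z; ext ω; simp [hC, Prod.ext_iff, eq_comm]
  have hEy : ∀ y : T, Y ⁻¹' {y} = C ⁻¹' (Set.univ ×ˢ {y} ×ˢ Set.univ) := by
    intro y; ext ω; simp [hC, eq_comm]
  have hEz : ∀ z : W, Z ⁻¹' {z} = C ⁻¹' (Set.univ ×ˢ Set.univ ×ˢ {z}) := by
    intro z; ext ω; simp [hC, eq_comm]
  have hEbz : ∀ (b : V) (z : W),
      B ⁻¹' {b} ∩ Z ⁻¹' {z} = C ⁻¹' ({b} ×ˢ Set.univ ×ˢ {z}) := by
    intro b z; ext ω; simp [hC, eq_comm, and_comm]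
  -- from H[B|Y] = 0: B is a.s. constant on each positive-measure fiber of Y
  have hdetY : ∀ y : T, μ (Y ⁻¹' {y}) ≠ 0 → ∃ b0, μ (Y ⁻¹' {y} ∩ (B ⁻¹' {b0})ᶜ) = 0 := by
    intro y hy
    have hprob : IsProbabilityMeasure (μ[|Y ⁻¹' {y}]) := cond_isProbabilityMeasure hy
    have hent0 : entropy (μ[|Y ⁻¹' {y}]) B = 0 := by
      rw [condEntropy_eq_sum] at hBY
      have hnn : ∀ t ∈ Finset.univ,
          (0 : ℝ) ≤ (μ (Y ⁻¹' {t})).toReal * entropy (μ[|Y ⁻¹' {t}]) B := fun t _ =>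
        mul_nonneg ENNReal.toReal_nonneg
          (entropy_cond_nonneg μ (hY (measurableSet_singleton t)) B)
      have h0 := (Finset.sum_eq_zero_iff_of_nonneg hnn).mp hBY y (Finset.mem_univ y)
      have hm : (μ (Y ⁻¹' {y})).toReal ≠ 0 := by
        intro hc
        rcases (ENNReal.toReal_eq_zero_iff _).mp hc with hc | hc
        · exact hy hc
        · exact measure_ne_top μ _ hc
      exact (mul_eq_zero.mp h0).resolve_left hm
    obtain ⟨b0, hb0⟩ := exists_of_entropy_zero (μ[|Y ⁻¹' {y}]) hBm hent0
    refine ⟨b0, ?_⟩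
    rw [cond_apply (hY (measurableSet_singleton y))] at hb0
    rcases mul_eq_zero.mp hb0 with h | h
    · exact absurd h (ENNReal.inv_ne_zero.mpr (measure_ne_top μ _))
    · exact h
  -- Key computation 1: H[X | ⟨Y,Z⟩] = H[A]
  have key1 : condEntropy μ X (fun ω => (Y ω, Z ω)) = entropy μ A := by
    rw [condEntropy_eq_sum]
    have step : ∀ p : T × W,
        (μ ((fun ω => (Y ω, Z ω)) ⁻¹' {p})).toReal *
          entropy (μ[|(fun ω => (Y ω, Z ω)) ⁻¹' {p}]) X
        = (μ ((fun ω => (Y ω, Z ω)) ⁻¹' {p})).toReal * entropy μ A := by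
      rintro ⟨y, z⟩
      rcases eq_or_ne (μ ((fun ω => (Y ω, Z ω)) ⁻¹' {(y, z)})) 0 with h0 | h0
      · rw [h0]; simp
      · congr 1
        have hEsub : (fun ω => (Y ω, Z ω)) ⁻¹' {(y, z)} ⊆ Y ⁻¹' {y} := by
          intro ω hω
          simp only [Set.mem_preimage, Set.mem_singleton_iff, Prod.ext_iff] at hω ⊢
          exact hω.1
        have hYne : μ (Y ⁻¹' {y}) ≠ 0 := fun hy0 => h0 (measure_mono_null hEsub hy0)
        obtain ⟨b0, hb0⟩ := hdetY y hYne
        set E := (fun ω => (Y ω, Z ω)) ⁻¹' {(y, z)} with hEdef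
        have hEm : MeasurableSet E := (hY.prodMk hZ) (measurableSet_singleton _)
        have hdet : (μ[|E]) ((B ⁻¹' {b0})ᶜ) = 0 := by
          rw [cond_apply hEm]
          have : μ (E ∩ (B ⁻¹' {b0})ᶜ) = 0 :=
            measure_mono_null (Set.inter_subset_inter_left _ hEsub) hb0
          rw [this, mul_zero]
        rw [hXpair (μ[|E]), entropy_pair_of_det (μ[|E]) A B hdet]
        refine hAent E ?_
        have hErw : E = C ⁻¹' (Set.univ ×ˢ {y} ×ˢ {z}) := hEyz y z
        rw [hErw] at h0 ⊢
        exact hcondA _ (MeasurableSet.univ.prod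
          ((measurableSet_singleton y).prod (measurableSet_singleton z))) h0
    rw [Finset.sum_congr rfl (fun p _ => step p), ← Finset.sum_mul,
      sum_toReal_preimage μ (hY.prodMk hZ), one_mul]
  -- Key computation 2: H[X | Y] = H[A]
  have key2 : condEntropy μ X Y = entropy μ A := by
    rw [condEntropy_eq_sum]
    have step : ∀ y : T,
        (μ (Y ⁻¹' {y})).toReal * entropy (μ[|Y ⁻¹' {y}]) X
        = (μ (Y ⁻¹' {y})).toReal * entropy μ A := by
      intro y
      rcases eq_or_ne (μ (Y ⁻¹' {y})) 0 with h0 | h0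
      · rw [h0]; simp
      · congr 1
        obtain ⟨b0, hb0⟩ := hdetY y h0
        have hEm : MeasurableSet (Y ⁻¹' {y}) := hY (measurableSet_singleton _)
        have hdet : (μ[|Y ⁻¹' {y}]) ((B ⁻¹' {b0})ᶜ) = 0 := by
          rw [cond_apply hEm, hb0, mul_zero]
        rw [hXpair (μ[|Y ⁻¹' {y}]), entropy_pair_of_det (μ[|Y ⁻¹' {y}]) A B hdet]
        refine hAent _ ?_
        rw [hEy y] at h0 ⊢
        exact hcondA _ (MeasurableSet.univ.prod
          ((measurableSet_singleton y).prod MeasurableSet.univ)) h0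
    rw [Finset.sum_congr rfl (fun y _ => step y), ← Finset.sum_mul,
      sum_toReal_preimage μ hY, one_mul]
  -- Key computation 3: H[X | Z] = H[A] + H[B | Z]
  have key3 : condEntropy μ X Z = entropy μ A + condEntropy μ B Z := by
    rw [condEntropy_eq_sum μ X Z, condEntropy_eq_sum μ B Z]
    have step : ∀ z : W,
        (μ (Z ⁻¹' {z})).toReal * entropy (μ[|Z ⁻¹' {z}]) X
        = (μ (Z ⁻¹' {z})).toReal * entropy μ A
          + (μ (Z ⁻¹' {z})).toReal * entropy (μ[|Z ⁻¹' {z}]) B := by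
      intro z
      rcases eq_or_ne (μ (Z ⁻¹' {z})) 0 with h0 | h0
      · rw [h0]; simp
      · rw [← mul_add]
        congr 1
        have hEm : MeasurableSet (Z ⁻¹' {z}) := hZ (measurableSet_singleton _)
        have hprob : IsProbabilityMeasure (μ[|Z ⁻¹' {z}]) := cond_isProbabilityMeasure h0
        have hprodhyp : ∀ (a : U) (b : V),
            (μ[|Z ⁻¹' {z}]) ((fun ω => (A ω, B ω)) ⁻¹' {(a, b)})
            = μ (A ⁻¹' {a}) * (μ[|Z ⁻¹' {z}]) (B ⁻¹' {b}) := by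
          intro a b
          rw [pair_preimage, cond_apply hEm, cond_apply hEm]
          have hset : Z ⁻¹' {z} ∩ (A ⁻¹' {a} ∩ B ⁻¹' {b})
              = A ⁻¹' {a} ∩ (B ⁻¹' {b} ∩ Z ⁻¹' {z}) := by
            ext ω; simp only [Set.mem_inter_iff]; tauto
          rw [hset, hEbz b z,
            hind a _ ((measurableSet_singleton b).prod
              (MeasurableSet.univ.prod (measurableSet_singleton z))),
            Set.inter_comm (Z ⁻¹' {z}) (B ⁻¹' {b}), hEbz b z]
          ring
        rw [hXpair (μ[|Z ⁻¹' {z}]),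
          entropy_pair_of_indep μ (μ[|Z ⁻¹' {z}]) A B hAm hBm hprodhyp]
    calc ∑ z : W, (μ (Z ⁻¹' {z})).toReal * entropy (μ[|Z ⁻¹' {z}]) X
        = ∑ z : W, ((μ (Z ⁻¹' {z})).toReal * entropy μ A
            + (μ (Z ⁻¹' {z})).toReal * entropy (μ[|Z ⁻¹' {z}]) B) :=
          Finset.sum_congr rfl fun z _ => step z
      _ = (∑ z : W, (μ (Z ⁻¹' {z})).toReal) * entropy μ A
            + ∑ z : W, (μ (Z ⁻¹' {z})).toReal * entropy (μ[|Z ⁻¹' {z}]) B := by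
          rw [Finset.sum_add_distrib, ← Finset.sum_mul]
      _ = _ := by rw [sum_toReal_preimage μ hZ, one_mul]
  refine ⟨⟨key1.trans key2.symm, key2⟩, ?_⟩
  rw [key1, key3]
  ring
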